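/- Let Q = Q+(2n−1,q) with n ≥ 2, let μ be an integer-valued function on the points of Q satisfying Property (*) with parameter x (x a positive integer), and let P0 be a point of Q. Then Σ_{P2} Σ_{P'∈{P0,P2}⊥} μ(P') = q^{2n−3}·( (q^{n−1}−1)·μ(P0) + x·θ_{n−2} ), where the outer sum ranges over all points P2 of Q that are not collinear with P0. -/

import Mathlib

/-- `thgeom q k = 1 + q + ⋯ + q^(k-1)`, i.e. `θ_{k-1}` in the paper's notation,
so that `θ_j = thgeom q (j+1)` and `θ_{-1} = thgeom q 0 = 0`. -/
def thgeom (q k : ℕ) : ℕ := ∑ i ∈ Finset.range k, q ^ i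

variable {𝔽 : Type} [Field 𝔽]

/-- The hyperbolic quadratic form `f(x) = x_1x_2 + x_3x_4 + ⋯ + x_{2m-1}x_{2m}` on `𝔽^{2m}`. -/
def hypQ (m : ℕ) (v : Fin (2 * m) → 𝔽) : 𝔽 :=
  ∑ i : Fin m, v ⟨2 * i.val, by have := i.isLt; omega⟩ *
    v ⟨2 * i.val + 1, by have := i.isLt; omega⟩

/-- The polar bilinear form `b(x,y) = f(x+y) − f(x) − f(y)`. -/
def hypB (m : ℕ) (v w : Fin (2 * m) → 𝔽) : 𝔽 := hypQ m (v + w) - hypQ m v - hypQ m w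

/-- The projective point `P` lies on the hyperbolic quadric. -/
def onQ {m : ℕ} (P : Projectivization 𝔽 (Fin (2 * m) → 𝔽)) : Prop := hypQ m P.rep = 0

/-- The set of points of the hyperbolic quadric `Q⁺(2m−1, q)` inside `PG(2m−1,q)`. -/
def Qset (𝔽 : Type) [Field 𝔽] (m : ℕ) : Set (Projectivization 𝔽 (Fin (2 * m) → 𝔽)) :=
  {P | onQ P}

/-- Two points are collinear if the polar form vanishes on their representatives. -/
def Collin {m : ℕ} (P P' : Projectivization 𝔽 (Fin (2 * m) → 𝔽)) : Prop :=
  hypB m P.rep P'.rep = 0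

/-- `perp P` is `P⊥`: the set of points of the quadric collinear with `P`. -/
def perp {m : ℕ} (P : Projectivization 𝔽 (Fin (2 * m) → 𝔽)) :
    Set (Projectivization 𝔽 (Fin (2 * m) → 𝔽)) :=
  {P' | onQ P' ∧ Collin P P'}

/-- The set of projective points lying in a subspace `W` of the ambient space. -/
def pts {m : ℕ} (W : Submodule 𝔽 (Fin (2 * m) → 𝔽)) :
    Set (Projectivization 𝔽 (Fin (2 * m) → 𝔽)) :=
  {P | P.rep ∈ W}

/-- `LSet P0` is `L(P0)`: the set of lines of the quadric through `P0`
(projective lines = 2-dimensional subspaces of `V`, entirely contained in the quadric). -/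
def LSet {m : ℕ} (P0 : Projectivization 𝔽 (Fin (2 * m) → 𝔽)) :
    Set (Submodule 𝔽 (Fin (2 * m) → 𝔽)) :=
  {ℓ | Module.finrank 𝔽 ℓ = 2 ∧ P0.rep ∈ ℓ ∧ ∀ P ∈ pts ℓ, onQ P}

instance {𝔽 : Type} [Field 𝔽] [Finite 𝔽] {k : ℕ} :
    Finite (Projectivization 𝔽 (Fin k → 𝔽)) :=
  Quotient.finite _

/-- Property (*): for every point `P` of the quadric `Q⁺(2n−1,q)`,
`Σ_{P1 ∈ P⊥} μ(P1) = x·θ_{n−2} + q^{n−1}·μ(P)`. -/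
def PropStar (q n x : ℕ) {𝔽 : Type} [Field 𝔽]
    (μ : Projectivization 𝔽 (Fin (2 * n) → 𝔽) → ℤ) : Prop :=
  ∀ P ∈ Qset 𝔽 n,
    ∑ᶠ P1 ∈ perp P, μ P1 = (x : ℤ) * thgeom q (n - 1) + (q : ℤ) ^ (n - 1) * μ P

/-- Property (**): for every pair `P1, P2` of non-collinear points of the quadric
`Q⁺(2n−1,q)`, `Σ_{P' ∈ {P1,P2}⊥} μ(P') = x·θ_{n−3} + q^{n−2}·(μ(P1)+μ(P2))`. -/
def PropStarStar (q n x : ℕ) {𝔽 : Type} [Field 𝔽]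
    (μ : Projectivization 𝔽 (Fin (2 * n) → 𝔽) → ℤ) : Prop :=
  ∀ P1 ∈ Qset 𝔽 n, ∀ P2 ∈ Qset 𝔽 n, ¬ Collin P1 P2 →
    ∑ᶠ P' ∈ perp P1 ∩ perp P2, μ P' =
      (x : ℤ) * thgeom q (n - 2) + (q : ℤ) ^ (n - 2) * (μ P1 + μ P2)

open Finset

section helpers
open scoped Classical
variable {𝔽 : Type} [Field 𝔽] {m : ℕ}

private def ix0 (m : ℕ) (i : Fin m) : Fin (2 * m) := ⟨2 * i.val, by have := i.isLt; omega⟩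
private def ix1 (m : ℕ) (i : Fin m) : Fin (2 * m) := ⟨2 * i.val + 1, by have := i.isLt; omega⟩

lemma hypQ_eq (v : Fin (2 * m) → 𝔽) : hypQ m v = ∑ i : Fin m, v (ix0 m i) * v (ix1 m i) := rfl

lemma hypB_eval (v w : Fin (2 * m) → 𝔽) :
    hypB m v w = ∑ i : Fin m, (v (ix0 m i) * w (ix1 m i) + v (ix1 m i) * w (ix0 m i)) := by
  unfold hypB
  rw [hypQ_eq, hypQ_eq, hypQ_eq, ← Finset.sum_sub_distrib, ← Finset.sum_sub_distrib]
  refine Finset.sum_congr rfl fun i _ => ?_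
  simp only [Pi.add_apply]; ring

lemma hypB_symm (v w : Fin (2 * m) → 𝔽) : hypB m v w = hypB m w v := by
  rw [hypB_eval, hypB_eval]
  exact Finset.sum_congr rfl fun i _ => by ring

lemma hypB_zero_right (v : Fin (2 * m) → 𝔽) : hypB m v 0 = 0 := by
  simp [hypB_eval]

lemma hypB_add_right (v w u : Fin (2 * m) → 𝔽) :
    hypB m v (w + u) = hypB m v w + hypB m v u := by
  rw [hypB_eval, hypB_eval, hypB_eval, ← Finset.sum_add_distrib]
  exact Finset.sum_congr rfl fun i _ => by simp only [Pi.add_apply]; ring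

lemma hypB_smul_right (v w : Fin (2 * m) → 𝔽) (c : 𝔽) :
    hypB m v (c • w) = c * hypB m v w := by
  rw [hypB_eval, hypB_eval, Finset.mul_sum]
  exact Finset.sum_congr rfl fun i _ => by simp only [Pi.smul_apply, smul_eq_mul]; ring

lemma hypB_sub_left (v w u : Fin (2 * m) → 𝔽) :
    hypB m (v - w) u = hypB m v u - hypB m w u := by
  rw [hypB_eval, hypB_eval, hypB_eval, ← Finset.sum_sub_distrib]
  exact Finset.sum_congr rfl fun i _ => by simp only [Pi.sub_apply]; ring

lemma hypB_smul_left (v w : Fin (2 * m) → 𝔽) (c : 𝔽) :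
    hypB m (c • v) w = c * hypB m v w := by
  rw [hypB_symm, hypB_smul_right, hypB_symm]

lemma hypQ_smul (v : Fin (2 * m) → 𝔽) (c : 𝔽) : hypQ m (c • v) = c ^ 2 * hypQ m v := by
  rw [hypQ_eq, hypQ_eq, Finset.mul_sum]
  exact Finset.sum_congr rfl fun i _ => by simp only [Pi.smul_apply, smul_eq_mul]; ring

lemma hypQ_add (v w : Fin (2 * m) → 𝔽) :
    hypQ m (v + w) = hypQ m v + hypQ m w + hypB m v w := by
  unfold hypB; ring

lemma hypB_self (v : Fin (2 * m) → 𝔽) : hypB m v v = 2 * hypQ m v := by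
  rw [hypB_eval, hypQ_eq, Finset.mul_sum]
  exact Finset.sum_congr rfl fun i _ => by ring

lemma ix0_val (i : Fin m) : (ix0 m i).val = 2 * i.val := rfl
lemma ix1_val (i : Fin m) : (ix1 m i).val = 2 * i.val + 1 := rfl

lemma ix0_ne_ix1 (i j : Fin m) : ix0 m i ≠ ix1 m j := by
  intro h
  have := congrArg Fin.val h
  rw [ix0_val, ix1_val] at this
  omega

lemma ix1_eq_iff (i j : Fin m) : ix1 m i = ix1 m j ↔ i = j := by
  constructor
  · intro h
    have := congrArg Fin.val h
    rw [ix1_val, ix1_val] at this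
    exact Fin.ext (by omega)
  · rintro rfl; rfl

lemma ix0_eq_iff (i j : Fin m) : ix0 m i = ix0 m j ↔ i = j := by
  constructor
  · intro h
    have := congrArg Fin.val h
    rw [ix0_val, ix0_val] at this
    exact Fin.ext (by omega)
  · rintro rfl; rfl

lemma hypB_single_even (v : Fin (2 * m) → 𝔽) (i₀ : Fin m) :
    hypB m v (Pi.single (ix1 m i₀) (1 : 𝔽)) = v (ix0 m i₀) := by
  rw [hypB_eval]
  rw [Finset.sum_eq_single i₀]
  · rw [Pi.single_eq_same, Pi.single_eq_of_ne (ix0_ne_ix1 i₀ i₀)]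
    ring
  · intro b _ hb
    rw [Pi.single_eq_of_ne (fun h => hb ((ix1_eq_iff b i₀).mp h)),
      Pi.single_eq_of_ne (ix0_ne_ix1 b i₀)]
    ring
  · intro h; exact absurd (Finset.mem_univ i₀) h

lemma hypB_single_odd (v : Fin (2 * m) → 𝔽) (i₀ : Fin m) :
    hypB m v (Pi.single (ix0 m i₀) (1 : 𝔽)) = v (ix1 m i₀) := by
  rw [hypB_eval]
  rw [Finset.sum_eq_single i₀]
  · rw [Pi.single_eq_same, Pi.single_eq_of_ne (Ne.symm (ix0_ne_ix1 i₀ i₀))]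
    ring
  · intro b _ hb
    rw [Pi.single_eq_of_ne (Ne.symm (ix0_ne_ix1 i₀ b)),
      Pi.single_eq_of_ne (fun h => hb ((ix0_eq_iff b i₀).mp h))]
    ring
  · intro h; exact absurd (Finset.mem_univ i₀) h

/-- nondegeneracy of the polar form -/
lemma exists_hypB_ne (v : Fin (2 * m) → 𝔽) (hv : v ≠ 0) : ∃ w, hypB m v w ≠ 0 := by
  obtain ⟨j, hj⟩ := Function.ne_iff.mp hv
  simp only [Pi.zero_apply] at hj
  rcases Nat.even_or_odd j.val with he | ho
  · obtain ⟨k, hk⟩ := he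
    have hkm : k < m := by have := j.isLt; omega
    refine ⟨Pi.single (ix1 m ⟨k, hkm⟩) 1, ?_⟩
    rw [hypB_single_even]
    have : ix0 m ⟨k, hkm⟩ = j := Fin.ext (by simp [ix0]; omega)
    rwa [this]
  · obtain ⟨k, hk⟩ := ho
    have hkm : k < m := by have := j.isLt; omega
    refine ⟨Pi.single (ix0 m ⟨k, hkm⟩) 1, ?_⟩
    rw [hypB_single_odd]
    have : ix1 m ⟨k, hkm⟩ = j := Fin.ext (by simp [ix1]; omega)
    rwa [this]

lemma eq_zero_of_hypB (v : Fin (2 * m) → 𝔽) (h : ∀ w, hypB m v w = 0) : v = 0 := by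
  by_contra hv
  obtain ⟨w, hw⟩ := exists_hypB_ne v hv
  exact hw (h w)

/-- separation: if `v0` is not a multiple of `v'`, some `w` is orthogonal to `v'` but not `v0`. -/
lemma exists_sep (v0 v' : Fin (2 * m) → 𝔽) (hv0 : v0 ≠ 0)
    (hind : ∀ c : 𝔽, v0 ≠ c • v') :
    ∃ w, hypB m v' w = 0 ∧ hypB m v0 w ≠ 0 := by
  by_contra hcon
  push_neg at hcon
  by_cases hv' : v' = 0
  · obtain ⟨w, hw⟩ := exists_hypB_ne v0 hv0
    exact hw (hcon w (by simp [hv', hypB_eval]))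
  obtain ⟨u, hu⟩ := exists_hypB_ne v' hv'
  set c : 𝔽 := hypB m v0 u / hypB m v' u with hc
  apply hind c
  have hz : v0 - c • v' = 0 := by
    apply eq_zero_of_hypB
    intro w
    have hwt : hypB m v' (w - (hypB m v' w / hypB m v' u) • u) = 0 := by
      rw [sub_eq_add_neg, hypB_add_right, ← neg_smul, hypB_smul_right]
      field_simp
      ring
    have h0 : hypB m v0 (w - (hypB m v' w / hypB m v' u) • u) = 0 := hcon _ hwt
    rw [sub_eq_add_neg, hypB_add_right, ← neg_smul, hypB_smul_right] at h0
    rw [hypB_sub_left, hypB_smul_left, hc]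
    field_simp at h0 ⊢
    linear_combination h0
  have := sub_eq_zero.mp hz
  exact this
end helpers

section counting
open scoped Classical
variable {𝔽 : Type} [Field 𝔽] [Fintype 𝔽] {m : ℕ}

/-- fibers of an "affine" functional partition a translation-stable set evenly. -/
lemma card_eq_card_mul_fiber (s : Finset (Fin (2 * m) → 𝔽)) (φ : (Fin (2 * m) → 𝔽) → 𝔽)
    (u : Fin (2 * m) → 𝔽)
    (hs : ∀ w ∈ s, ∀ c : 𝔽, w + c • u ∈ s)
    (hφ : ∀ w, ∀ c : 𝔽, φ (w + c • u) = φ w + c) :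
    s.card = Fintype.card 𝔽 * (s.filter (fun w => φ w = 0)).card := by
  rw [Finset.card_eq_sum_card_fiberwise (f := φ) (t := Finset.univ) (fun x _ => Finset.mem_univ _)]
  have h0 : ∀ c : 𝔽, (s.filter (fun w => φ w = c)).card = (s.filter (fun w => φ w = 0)).card := by
    intro c
    apply Finset.card_bij (fun w _ => w + (-c) • u)
    · intro a ha
      simp only [Finset.mem_filter] at ha ⊢
      exact ⟨hs a ha.1 _, by rw [hφ, ha.2]; ring⟩
    · intro a _ b _ h
      exact add_right_cancel h
    · intro b hb
      simp only [Finset.mem_filter] at hb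
      refine ⟨b + c • u, Finset.mem_filter.mpr ⟨hs b hb.1 _, by rw [hφ, hb.2]; ring⟩, ?_⟩
      rw [add_assoc, ← add_smul]
      simp
  calc (∑ c : 𝔽, (s.filter (fun w => φ w = c)).card)
      = ∑ _c : 𝔽, (s.filter (fun w => φ w = 0)).card := by
        exact Finset.sum_congr rfl fun c _ => h0 c
    _ = Fintype.card 𝔽 * (s.filter (fun w => φ w = 0)).card := by
        rw [Finset.sum_const, Finset.card_univ, smul_eq_mul]

/-- the coset trick: on a set where `B ≠ 0`, the quadric zeros form a `1/q` fraction. -/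
lemma card_eq_card_mul_fiberQ (s : Finset (Fin (2 * m) → 𝔽)) (B : (Fin (2 * m) → 𝔽) → 𝔽)
    (u : Fin (2 * m) → 𝔽)
    (hsB : ∀ w ∈ s, B w ≠ 0)
    (hs : ∀ w ∈ s, ∀ c : 𝔽, w + c • u ∈ s)
    (hB : ∀ w, ∀ c : 𝔽, B (w + c • u) = B w)
    (hφ : ∀ w, ∀ c : 𝔽, hypQ m (w + c • u) = hypQ m w + c * B w) :
    s.card = Fintype.card 𝔽 * (s.filter (fun w => hypQ m w = 0)).card := by
  rw [Finset.card_eq_sum_card_fiberwise (f := fun w => hypQ m w) (t := Finset.univ)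
    (fun x _ => Finset.mem_univ _)]
  have h0 : ∀ c : 𝔽, (s.filter (fun w => hypQ m w = c)).card
      = (s.filter (fun w => hypQ m w = 0)).card := by
    intro c
    apply Finset.card_bij (fun w _ => w + (-c / B w) • u)
    · intro a ha
      simp only [Finset.mem_filter] at ha ⊢
      refine ⟨hs a ha.1 _, ?_⟩
      rw [hφ, ha.2, div_mul_cancel₀ _ (hsB a ha.1)]
      ring
    · intro a ha b hb h
      simp only [Finset.mem_filter] at ha hb
      have hBab : B a = B b := by
        have := congrArg B h
        rwa [hB, hB] at this
      rw [hBab] at h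
      exact add_right_cancel h
    · intro b hb
      simp only [Finset.mem_filter] at hb
      have hBb := hsB b hb.1
      refine ⟨b + (c / B b) • u, Finset.mem_filter.mpr ⟨hs b hb.1 _, by
        rw [hφ, hb.2, div_mul_cancel₀ _ hBb]; ring⟩, ?_⟩
      rw [hB, add_assoc, ← add_smul]
      have : c / B b + -c / B b = 0 := by ring
      rw [this]
      simp
  calc (∑ c : 𝔽, (s.filter (fun w => hypQ m w = c)).card)
      = ∑ _c : 𝔽, (s.filter (fun w => hypQ m w = 0)).card := by
        exact Finset.sum_congr rfl fun c _ => h0 c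
    _ = _ := by rw [Finset.sum_const, Finset.card_univ, smul_eq_mul]

end counting

section counting2
open scoped Classical
variable {𝔽 : Type} [Field 𝔽] [Fintype 𝔽] {m : ℕ}

noncomputable local instance : Fintype (Projectivization 𝔽 (Fin (2 * m) → 𝔽)) :=
  Fintype.ofFinite _

lemma pred_smul_iff (v0 v' w : Fin (2 * m) → 𝔽) (c : 𝔽) (hc : c ≠ 0) :
    (hypQ m (c • w) = 0 ∧ hypB m v' (c • w) = 0 ∧ hypB m v0 (c • w) ≠ 0) ↔
      (hypQ m w = 0 ∧ hypB m v' w = 0 ∧ hypB m v0 w ≠ 0) := by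
  rw [hypQ_smul, hypB_smul_right, hypB_smul_right]
  have hc2 : c ^ 2 ≠ 0 := pow_ne_zero _ hc
  constructor
  · rintro ⟨h1, h2, h3⟩
    refine ⟨by rcases mul_eq_zero.mp h1 with h | h; exact absurd h hc2; exact h,
      by rcases mul_eq_zero.mp h2 with h | h; exact absurd h hc; exact h,
      fun h => h3 (by rw [h, mul_zero])⟩
  · rintro ⟨h1, h2, h3⟩
    exact ⟨by rw [h1, mul_zero], by rw [h2, mul_zero], fun h => h3 (by
      rcases mul_eq_zero.mp h with h' | h'; exact absurd h' hc; exact h')⟩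

lemma vec_point_card (v0 v' : Fin (2 * m) → 𝔽) (hv0 : v0 ≠ 0) :
    (Finset.univ.filter (fun w : Fin (2 * m) → 𝔽 =>
        hypQ m w = 0 ∧ hypB m v' w = 0 ∧ hypB m v0 w ≠ 0)).card
      = (Fintype.card 𝔽 - 1) *
        (Finset.univ.filter (fun P : Projectivization 𝔽 (Fin (2 * m) → 𝔽) =>
          hypQ m P.rep = 0 ∧ hypB m v' P.rep = 0 ∧ hypB m v0 P.rep ≠ 0)).card := by
  classical
  set Sv := Finset.univ.filter (fun w : Fin (2 * m) → 𝔽 =>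
      hypQ m w = 0 ∧ hypB m v' w = 0 ∧ hypB m v0 w ≠ 0) with hSv
  set Sp := Finset.univ.filter (fun P : Projectivization 𝔽 (Fin (2 * m) → 𝔽) =>
      hypQ m P.rep = 0 ∧ hypB m v' P.rep = 0 ∧ hypB m v0 P.rep ≠ 0) with hSp
  set g : (Fin (2 * m) → 𝔽) → Projectivization 𝔽 (Fin (2 * m) → 𝔽) :=
    fun w => if h : w = 0 then Projectivization.mk 𝔽 v0 hv0 else Projectivization.mk 𝔽 w h
    with hg
  have hwne : ∀ w ∈ Sv, w ≠ 0 := by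
    intro w hw
    simp only [hSv, Finset.mem_filter] at hw
    intro h
    exact hw.2.2.2 (by rw [h, hypB_zero_right])
  have hmaps : ∀ w ∈ Sv, g w ∈ Sp := by
    intro w hw
    have hw0 := hwne w hw
    simp only [hSv, Finset.mem_filter] at hw
    simp only [hg, dif_neg hw0, hSp, Finset.mem_filter]
    refine ⟨Finset.mem_univ _, ?_⟩
    obtain ⟨a, ha⟩ := (Projectivization.mk_eq_mk_iff 𝔽 _ _
      (Projectivization.rep_nonzero _) hw0).mp (Projectivization.mk_rep _)
    rw [← ha]
    exact (pred_smul_iff v0 v' w (a : 𝔽) a.ne_zero).mpr hw.2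
  rw [Finset.card_eq_sum_card_fiberwise hmaps]
  have hfib : ∀ P ∈ Sp, (Sv.filter (fun w => g w = P)).card = Fintype.card 𝔽 - 1 := by
    intro P hP
    simp only [hSp, Finset.mem_filter] at hP
    rw [← Fintype.card_units (α := 𝔽), ← Finset.card_univ]
    symm
    apply Finset.card_bij (fun (c : 𝔽ˣ) _ => (c : 𝔽) • P.rep)
    · intro c _
      have hcne : ((c : 𝔽) • P.rep) ≠ 0 :=
        smul_ne_zero c.ne_zero (Projectivization.rep_nonzero P)
      simp only [Finset.mem_filter, hSv]
      refine ⟨⟨Finset.mem_univ _, (pred_smul_iff v0 v' P.rep (c : 𝔽) c.ne_zero).mpr hP.2⟩, ?_⟩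
      · simp only [hg, dif_neg hcne]
        rw [show Projectivization.mk 𝔽 ((c : 𝔽) • P.rep) hcne = Projectivization.mk 𝔽 P.rep
          (Projectivization.rep_nonzero P) from
          (Projectivization.mk_eq_mk_iff 𝔽 _ _ hcne (Projectivization.rep_nonzero P)).mpr
            ⟨c, rfl⟩]
        exact Projectivization.mk_rep P
    · intro a _ b _ h
      have := sub_eq_zero.mpr h
      rw [← sub_smul] at this
      rcases smul_eq_zero.mp this with h' | h'
      · exact Units.ext (by exact sub_eq_zero.mp h')
      · exact absurd h' (Projectivization.rep_nonzero P)
    · intro w hw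
      simp only [Finset.mem_filter] at hw
      have hw0 := hwne w hw.1
      have hgw : Projectivization.mk 𝔽 w hw0 = P := by
        have h2 := hw.2
        simp only [hg] at h2
        rwa [dif_neg hw0] at h2
      rw [← Projectivization.mk_rep P] at hgw
      obtain ⟨a, ha⟩ := (Projectivization.mk_eq_mk_iff 𝔽 _ _ hw0
        (Projectivization.rep_nonzero P)).mp hgw
      exact ⟨a, Finset.mem_univ _, ha⟩
  calc (∑ P ∈ Sp, (Sv.filter (fun w => g w = P)).card)
      = ∑ P ∈ Sp, (Fintype.card 𝔽 - 1) := Finset.sum_congr rfl hfib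
    _ = (Fintype.card 𝔽 - 1) * Sp.card := by rw [Finset.sum_const, smul_eq_mul, mul_comm]

end counting2

section keycount
open scoped Classical
variable {𝔽 : Type} [Field 𝔽] [Fintype 𝔽] {m : ℕ}

noncomputable local instance : Fintype (Projectivization 𝔽 (Fin (2 * m) → 𝔽)) :=
  Fintype.ofFinite _

/-- The key count: for nonproportional `v0, v'` with `hypQ v0 = 0` and `hypB v' v0 = 0`,
the number of quadric points collinear with `v'` but not with `v0` is `q^(2m-3)`. -/
lemma card_Sp (hm : 2 ≤ m) (v0 v' : Fin (2 * m) → 𝔽)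
    (hv0 : v0 ≠ 0) (hv' : v' ≠ 0) (hind : ∀ c : 𝔽, v0 ≠ c • v')
    (hq0 : hypQ m v0 = 0) (hb : hypB m v' v0 = 0) :
    (Finset.univ.filter (fun P : Projectivization 𝔽 (Fin (2 * m) → 𝔽) =>
        hypQ m P.rep = 0 ∧ hypB m v' P.rep = 0 ∧ hypB m v0 P.rep ≠ 0)).card
      = (Fintype.card 𝔽) ^ (2 * m - 3) := by
  classical
  set q := Fintype.card 𝔽 with hqdef
  have hq2 : 2 ≤ q := Fintype.one_lt_card
  set A := Finset.univ.filter (fun w : Fin (2 * m) → 𝔽 => hypB m v' w = 0) with hA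
  set AB := Finset.univ.filter (fun w : Fin (2 * m) → 𝔽 =>
    hypB m v' w = 0 ∧ hypB m v0 w = 0) with hAB
  set T := Finset.univ.filter (fun w : Fin (2 * m) → 𝔽 =>
    hypB m v' w = 0 ∧ hypB m v0 w ≠ 0) with hT
  set Sv := Finset.univ.filter (fun w : Fin (2 * m) → 𝔽 =>
    hypQ m w = 0 ∧ hypB m v' w = 0 ∧ hypB m v0 w ≠ 0) with hSv
  -- e1 : q^(2m) = q * A.card
  have e1 : q ^ (2 * m) = q * A.card := by
    obtain ⟨u₁, hu₁⟩ := exists_hypB_ne v' hv'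
    have h := card_eq_card_mul_fiber (Finset.univ) (fun w => hypB m v' w)
      ((hypB m v' u₁)⁻¹ • u₁) (fun w _ c => Finset.mem_univ _)
      (fun w c => by rw [hypB_add_right, hypB_smul_right, hypB_smul_right,
        inv_mul_cancel₀ hu₁, mul_one])
    rw [Finset.card_univ, Fintype.card_fun, Fintype.card_fin] at h
    exact h
  -- e2 : A.card = q * AB.card
  have e2 : A.card = q * AB.card := by
    obtain ⟨u₂, hu₂0, hu₂⟩ := exists_sep v0 v' hv0 hind
    have h := card_eq_card_mul_fiber A (fun w => hypB m v0 w)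
      ((hypB m v0 u₂)⁻¹ • u₂)
      (fun w hw c => by
        simp only [hA, Finset.mem_filter] at hw ⊢
        exact ⟨Finset.mem_univ _, by
          rw [hypB_add_right, hypB_smul_right, hypB_smul_right, hu₂0, hw.2]; ring⟩)
      (fun w c => by rw [hypB_add_right, hypB_smul_right, hypB_smul_right,
        inv_mul_cancel₀ hu₂, mul_one])
    rw [h]
    congr 1
    rw [hA, Finset.filter_filter]
  -- e3 : AB.card + T.card = A.card
  have e3 : AB.card + T.card = A.card := by
    have h := Finset.card_filter_add_card_filter_not
      (s := A) (p := fun w => hypB m v0 w = 0)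
    rw [hA, Finset.filter_filter, Finset.filter_filter] at h
    exact h
  -- e4 : T.card = q * Sv.card
  have hbv0v0 : hypB m v0 v0 = 0 := by rw [hypB_self, hq0, mul_zero]
  have e4 : T.card = q * Sv.card := by
    have h := card_eq_card_mul_fiberQ T (fun w => hypB m v0 w) v0
      (fun w hw => by simp only [hT, Finset.mem_filter] at hw; exact hw.2.2)
      (fun w hw c => by
        simp only [hT, Finset.mem_filter] at hw ⊢
        refine ⟨Finset.mem_univ _, ?_, ?_⟩
        · rw [hypB_add_right, hypB_smul_right, hb, hw.2.1]; ring
        · rw [hypB_add_right, hypB_smul_right, hbv0v0, mul_zero, add_zero]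
          exact hw.2.2)
      (fun w c => by rw [hypB_add_right, hypB_smul_right, hbv0v0, mul_zero, add_zero])
      (fun w c => by
        rw [hypQ_add, hypQ_smul, hq0, mul_zero, add_zero, hypB_smul_right,
          hypB_symm (m := m) w v0])
    rw [h]
    congr 1
    have heq : T.filter (fun w => hypQ m w = 0) = Sv := by
      rw [hT, Finset.filter_filter, hSv]
      ext x
      simp only [Finset.mem_filter, Finset.mem_univ, true_and]
      tauto
    rw [heq]
  -- e5
  have e5 : Sv.card = (q - 1) * (Finset.univ.filter
      (fun P : Projectivization 𝔽 (Fin (2 * m) → 𝔽) =>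
        hypQ m P.rep = 0 ∧ hypB m v' P.rep = 0 ∧ hypB m v0 P.rep ≠ 0)).card :=
    vec_point_card v0 v' hv0
  -- arithmetic in ℤ
  set Sp := (Finset.univ.filter (fun P : Projectivization 𝔽 (Fin (2 * m) → 𝔽) =>
      hypQ m P.rep = 0 ∧ hypB m v' P.rep = 0 ∧ hypB m v0 P.rep ≠ 0)).card with hSpdef
  set a := q ^ (2 * m - 3) with hadef
  have hqz : (q : ℤ) ≠ 0 := by positivity
  have hq1z : (q : ℤ) - 1 ≠ 0 := by
    have : (2 : ℤ) ≤ (q : ℤ) := by exact_mod_cast hq2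
    omega
  have hpow : (q : ℤ) ^ (2 * m) = (a : ℤ) * q * q * q := by
    have h1 : q ^ (2 * m) = q ^ (2 * m - 3) * q * q * q := by
      rw [← pow_succ, ← pow_succ, ← pow_succ]
      congr 1
      omega
    rw [hadef]
    exact_mod_cast h1
  have z1 : (q : ℤ) * A.card = a * q * q * q := by
    rw [← hpow]; exact_mod_cast e1.symm
  have zA : (A.card : ℤ) = a * q * q := by
    apply mul_left_cancel₀ hqz
    rw [z1]; ring
  have zAB : (AB.card : ℤ) = a * q := by
    apply mul_left_cancel₀ hqz
    have : (A.card : ℤ) = q * AB.card := by exact_mod_cast e2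
    rw [← this, zA]; ring
  have zT : (T.card : ℤ) = a * q * q - a * q := by
    have : (AB.card : ℤ) + T.card = A.card := by exact_mod_cast e3
    rw [zAB] at this
    rw [zA] at this
    linarith
  have zSv : (Sv.card : ℤ) = a * q - a := by
    apply mul_left_cancel₀ hqz
    have : (T.card : ℤ) = q * Sv.card := by exact_mod_cast e4
    rw [← this, zT]; ring
  have zSp : (Sp : ℤ) = a := by
    apply mul_left_cancel₀ hq1z
    have h5 : (Sv.card : ℤ) = ((q : ℤ) - 1) * Sp := by
      have : (Sv.card : ℤ) = ((q - 1 : ℕ) : ℤ) * Sp := by exact_mod_cast e5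
      rw [this]
      congr 1
      omega
    rw [← h5, zSv]; ring
  exact_mod_cast zSp

end keycount


/-- Let `μ` satisfy Property (*) with parameter `x > 0` on `Q⁺(2n−1,q)`
and let `P0` be a point of the quadric.  Then
`Σ_{P2 ∈ Q\P0⊥} Σ_{P'∈{P0,P2}⊥} μ(P') = q^{2n−3}·((q^{n−1}−1)·μ(P0) + x·θ_{n−2})`. -/
theorem double_sum_over_noncollinear
    {𝔽 : Type} [Field 𝔽] [Fintype 𝔽] (q n x : ℕ) (hq : Fintype.card 𝔽 = q) (hn : 2 ≤ n)
    (hx : 0 < x)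
    (μ : Projectivization 𝔽 (Fin (2 * n) → 𝔽) → ℤ)
    (hstar : PropStar q n x μ)
    (P0 : Projectivization 𝔽 (Fin (2 * n) → 𝔽)) (hP0 : P0 ∈ Qset 𝔽 n) :
    ∑ᶠ P2 ∈ Qset 𝔽 n \ perp P0, (∑ᶠ P' ∈ perp P0 ∩ perp P2, μ P') =
      (q : ℤ) ^ (2 * n - 3) *
        (((q : ℤ) ^ (n - 1) - 1) * μ P0 + (x : ℤ) * thgeom q (n - 1)) := by
  classical
  letI : Fintype (Projectivization 𝔽 (Fin (2 * n) → 𝔽)) := Fintype.ofFinite _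
  have hP0Q : hypQ n P0.rep = 0 := hP0
  set K : ℤ := (q : ℤ) ^ (2 * n - 3) with hK
  set PF : Finset (Projectivization 𝔽 (Fin (2 * n) → 𝔽)) :=
    Finset.univ.filter (fun P1 => onQ P1 ∧ Collin P0 P1) with hPF
  set O : Finset (Projectivization 𝔽 (Fin (2 * n) → 𝔽)) :=
    Finset.univ.filter (fun P2 => onQ P2 ∧ ¬ Collin P0 P2) with hO
  have hP0PF : P0 ∈ PF := by
    rw [hPF, Finset.mem_filter]
    exact ⟨Finset.mem_univ _, hP0, by rw [Collin, hypB_self, hP0Q, mul_zero]⟩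
  -- set-to-finset conversions
  have hOset : Qset 𝔽 n \ perp P0 = ↑O := by
    ext P
    simp only [Set.mem_diff, Qset, Set.mem_setOf_eq, perp, hO, Finset.coe_filter,
      Finset.mem_univ, true_and, Set.mem_setOf_eq]
    tauto
  have hPFset : perp P0 = ↑PF := by
    ext P
    simp only [perp, Set.mem_setOf_eq, hPF, Finset.coe_filter, Finset.mem_univ, true_and]
  have hIset : ∀ P2, perp P0 ∩ perp P2 = ↑(PF.filter (fun P' => Collin P2 P')) := by
    intro P2
    ext P
    simp only [Set.mem_inter_iff, perp, Set.mem_setOf_eq, Finset.coe_filter, hPF,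
      Finset.mem_filter, Finset.mem_univ, true_and, Set.mem_setOf_eq]
    tauto
  -- rewrite the goal as a double Finset sum
  rw [hOset, finsum_mem_coe_finset]
  have hstep1 : (∑ P2 ∈ O, ∑ᶠ P' ∈ perp P0 ∩ perp P2, μ P')
      = ∑ P2 ∈ O, ∑ P' ∈ PF.filter (fun P' => Collin P2 P'), μ P' := by
    refine Finset.sum_congr rfl fun P2 _ => ?_
    rw [hIset P2, finsum_mem_coe_finset]
  rw [hstep1]
  -- swap the two sums
  have hstep2 : (∑ P2 ∈ O, ∑ P' ∈ PF.filter (fun P' => Collin P2 P'), μ P')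
      = ∑ P' ∈ PF, ((O.filter (fun P2 => Collin P2 P')).card : ℤ) * μ P' := by
    have h1 : ∀ P2, (∑ P' ∈ PF.filter (fun P' => Collin P2 P'), μ P')
        = ∑ P' ∈ PF, if Collin P2 P' then μ P' else 0 :=
      fun P2 => Finset.sum_filter _ _
    calc (∑ P2 ∈ O, ∑ P' ∈ PF.filter (fun P' => Collin P2 P'), μ P')
        = ∑ P2 ∈ O, ∑ P' ∈ PF, if Collin P2 P' then μ P' else 0 :=
          Finset.sum_congr rfl fun P2 _ => h1 P2
      _ = ∑ P' ∈ PF, ∑ P2 ∈ O, if Collin P2 P' then μ P' else 0 := Finset.sum_comm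
      _ = ∑ P' ∈ PF, ((O.filter (fun P2 => Collin P2 P')).card : ℤ) * μ P' := by
          refine Finset.sum_congr rfl fun P' _ => ?_
          rw [← Finset.sum_filter, Finset.sum_const, nsmul_eq_mul]
  rw [hstep2]
  -- evaluate the cardinalities
  have hcard : ∀ P' ∈ PF, ((O.filter (fun P2 => Collin P2 P')).card : ℤ)
      = if P' = P0 then 0 else K := by
    intro P' hP'
    rw [hPF, Finset.mem_filter] at hP'
    by_cases hPP : P' = P0
    · rw [if_pos hPP, hPP]
      have hempty : O.filter (fun P2 => Collin P2 P0) = ∅ := by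
        rw [Finset.filter_eq_empty_iff]
        intro P2 hP2
        rw [hO, Finset.mem_filter] at hP2
        intro hc
        exact hP2.2.2 (by rw [Collin, hypB_symm]; exact hc)
      rw [hempty]
      simp
    · rw [if_neg hPP]
      have hb : hypB n P'.rep P0.rep = 0 := by
        rw [hypB_symm]; exact hP'.2.2
      have hind : ∀ c : 𝔽, P0.rep ≠ c • P'.rep := by
        intro c hc
        have hc0 : c ≠ 0 := by
          intro h
          rw [h, zero_smul] at hc
          exact Projectivization.rep_nonzero P0 hc
        apply hPP
        have h1 : Projectivization.mk 𝔽 P0.rep (Projectivization.rep_nonzero P0)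
            = Projectivization.mk 𝔽 P'.rep (Projectivization.rep_nonzero P') :=
          (Projectivization.mk_eq_mk_iff 𝔽 _ _ _ _).mpr ⟨Units.mk0 c hc0, by
            simp [Units.smul_def, hc]⟩
        rw [Projectivization.mk_rep, Projectivization.mk_rep] at h1
        exact h1.symm
      have hset : O.filter (fun P2 => Collin P2 P')
          = Finset.univ.filter (fun P : Projectivization 𝔽 (Fin (2 * n) → 𝔽) =>
              hypQ n P.rep = 0 ∧ hypB n P'.rep P.rep = 0 ∧ hypB n P0.rep P.rep ≠ 0) := by
        rw [hO, Finset.filter_filter]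
        ext P
        rw [Finset.mem_filter, Finset.mem_filter]
        simp only [Finset.mem_filter, Finset.mem_univ, true_and, onQ, Collin]
        constructor
        · rintro ⟨⟨h1, h2⟩, h3⟩
          exact ⟨h1, by rw [hypB_symm]; exact h3, h2⟩
        · rintro ⟨h1, h2, h3⟩
          exact ⟨⟨h1, h3⟩, by rw [hypB_symm]; exact h2⟩
      rw [hset, card_Sp hn P0.rep P'.rep (Projectivization.rep_nonzero P0)
        (Projectivization.rep_nonzero P') hind hP0Q hb, hq, hK]
      push_cast
      ring
  -- use Property (*)
  have hstar0 := hstar P0 hP0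
  rw [hPFset, finsum_mem_coe_finset] at hstar0
  calc (∑ P' ∈ PF, ((O.filter (fun P2 => Collin P2 P')).card : ℤ) * μ P')
      = ∑ P' ∈ PF, (K * μ P' - if P' = P0 then K * μ P' else 0) := by
        refine Finset.sum_congr rfl fun P' hP' => ?_
        rw [hcard P' hP']
        by_cases h : P' = P0
        · rw [if_pos h, if_pos h]; ring
        · rw [if_neg h, if_neg h]; ring
    _ = K * (∑ P' ∈ PF, μ P') - K * μ P0 := by
        rw [Finset.sum_sub_distrib, ← Finset.mul_sum, Finset.sum_ite_eq' PF P0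
          (fun P' => K * μ P'), if_pos hP0PF]
    _ = (q : ℤ) ^ (2 * n - 3) *
        (((q : ℤ) ^ (n - 1) - 1) * μ P0 + (x : ℤ) * thgeom q (n - 1)) := by
        rw [hstar0, hK]
        ring
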